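/- arXiv:1807.03609 — 4 statements merged into one kernel-verified Lean document; each statement's English description precedes it below -/
import Mathlib

section
/- Let ν ≥ 2, let α ∈ ℝ^ν with α_a ∈ (0,1) for all a, let k ∈ ℝ^ν with k_a ∈ (0,1) for all a, and set k* = min_a k_a. If c > 1 + (ν−1)/k*, then the ν×ν matrix J^c = c·diag(k_1α_1², …, k_να_ν²) − J is positive definite, where J is the matrix with J_{aa} = k_a α_a² and J_{ab} = α_a α_b for a ≠ b. -/
/-- The multi-species Hopfield interaction matrix `J`, with `J_{aa} = k_a α_a²`
and `J_{ab} = α_a α_b` for `a ≠ b`. -/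
def hopfieldJ (ν : ℕ) (α k : Fin ν → ℝ) : Matrix (Fin ν) (Fin ν) ℝ :=
  Matrix.of fun a b => if a = b then k a * α a ^ 2 else α a * α b

/-- If `c > 1 + (ν-1)/k*`, with `k* = min_a k_a`, then
`J^c = c·diag(k_a α_a²) - J` is positive definite. -/
theorem stmt0 (ν : ℕ) (hν : 2 ≤ ν) (α k : Fin ν → ℝ)
    (hα : ∀ a, α a ∈ Set.Ioo (0 : ℝ) 1) (hk : ∀ a, k a ∈ Set.Ioo (0 : ℝ) 1)
    (kstar : ℝ) (hkstar : IsLeast (Set.range k) kstar)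
    (c : ℝ) (hc : c > 1 + ((ν : ℝ) - 1) / kstar) :
    (c • Matrix.diagonal (fun a => k a * α a ^ 2) - hopfieldJ ν α k).PosDef := by
  obtain ⟨⟨a0, ha0⟩, hle⟩ := hkstar
  have hkle : ∀ a, kstar ≤ k a := fun a => hle ⟨a, rfl⟩
  have hks0 : 0 < kstar := ha0 ▸ (hk a0).1
  have hν1 : (1 : ℝ) ≤ (ν : ℝ) := by exact_mod_cast Nat.one_le_of_lt hν
  have hc1 : 1 < c := lt_of_le_of_lt (le_add_of_nonneg_right
    (div_nonneg (by linarith) hks0.le)) hc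
  have hkey : (ν : ℝ) - 1 < (c - 1) * kstar := by
    have := (div_lt_iff₀ hks0).mp (by linarith : ((ν : ℝ) - 1) / kstar < c - 1)
    linarith
  set M := c • Matrix.diagonal (fun a => k a * α a ^ 2) - hopfieldJ ν α k with hM
  have hMab : ∀ a b, M a b =
      (if a = b then ((c - 1) * k a + 1) * α a ^ 2 else 0) - α a * α b := by
    intro a b
    simp only [hM, Matrix.sub_apply, Matrix.smul_apply, Matrix.diagonal_apply,
      hopfieldJ, Matrix.of_apply, smul_eq_mul]
    split_ifs with h
    · subst h; ring
    · ring
  rw [Matrix.posDef_iff_dotProduct_mulVec]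
  constructor
  · show Matrix.conjTranspose M = M
    ext a b
    rw [Matrix.conjTranspose_apply, star_trivial, hMab, hMab]
    rcases eq_or_ne a b with h | h
    · subst h; ring
    · rw [if_neg h, if_neg (Ne.symm h)]; ring
  · intro x hx
    simp only [RCLike.re_to_real, dotProduct, Matrix.mulVec,
      dotProduct, Pi.star_apply, star_trivial]
    have hform : ∑ a, x a * ∑ b, M a b * x b =
        (∑ a, ((c - 1) * k a + 1) * (α a * x a) ^ 2) - (∑ a, α a * x a) ^ 2 := by
      have hinner : ∀ a, ∑ b, M a b * x b =
          ((c - 1) * k a + 1) * α a ^ 2 * x a - α a * ∑ b, α b * x b := by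
        intro a
        have h1 : ∀ b ∈ Finset.univ, M a b * x b
            = ((if a = b then ((c - 1) * k a + 1) * α a ^ 2 else 0) * x b)
              - α a * (α b * x b) := by
          intro b _
          rw [hMab]; split_ifs <;> ring
        rw [Finset.sum_congr rfl h1, Finset.sum_sub_distrib, ← Finset.mul_sum]
        congr 1
        simp [Finset.sum_ite_eq]
      calc ∑ a, x a * ∑ b, M a b * x b
          = ∑ a, (((c - 1) * k a + 1) * (α a * x a) ^ 2
              - (α a * x a) * ∑ b, α b * x b) := by
            refine Finset.sum_congr rfl fun a _ => ?_
            rw [hinner a]; ring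
        _ = (∑ a, ((c - 1) * k a + 1) * (α a * x a) ^ 2) - (∑ a, α a * x a) ^ 2 := by
            rw [Finset.sum_sub_distrib, ← Finset.sum_mul, sq]
    rw [hform]
    set v : Fin ν → ℝ := fun a => α a * x a with hv
    have hCS : (∑ a, v a) ^ 2 ≤ (ν : ℝ) * ∑ a, v a ^ 2 := by
      have := sq_sum_le_card_mul_sum_sq (s := (Finset.univ : Finset (Fin ν))) (f := v)
      simpa using this
    have hcoef : ∀ a, ((c - 1) * kstar + 1) * v a ^ 2 ≤ ((c - 1) * k a + 1) * v a ^ 2 := by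
      intro a
      have : (c - 1) * kstar ≤ (c - 1) * k a :=
        mul_le_mul_of_nonneg_left (hkle a) (by linarith)
      nlinarith [sq_nonneg (v a)]
    have hsum : ((c - 1) * kstar + 1) * ∑ a, v a ^ 2 ≤
        ∑ a, ((c - 1) * k a + 1) * v a ^ 2 := by
      rw [Finset.mul_sum]
      exact Finset.sum_le_sum fun a _ => hcoef a
    have hpos : 0 < ∑ a, v a ^ 2 := by
      obtain ⟨a, ha⟩ := Function.ne_iff.mp hx
      have hva : v a ≠ 0 := mul_ne_zero (ne_of_gt (hα a).1) ha
      exact Finset.sum_pos' (fun i _ => sq_nonneg _)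
        ⟨a, Finset.mem_univ a, by positivity⟩
    nlinarith [hsum, hCS, hpos]
end

section
/- Let P ≥ 1, β ≥ 0, γ > 0, and let ⟨·⟩_ξ and ⟨·⟩_η denote expectations with respect to ξ and η uniform on {−1,1}^P. If p ∈ ℝ^P satisfies p = ⟨ξ tanh(β ξ·p)⟩_ξ + √γ ⟨η tanh((β/√γ) η·p)⟩_η, then |p|² ≤ 2β |p|². -/
open Finset

/-- `±1` value of a boolean. -/
def spin (b : Bool) : ℝ := if b then 1 else -1

/-- Expectation with respect to `ξ` uniform on `{-1,1}^P`. -/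
noncomputable def unifExp (P : ℕ) (f : (Fin P → ℝ) → ℝ) : ℝ :=
  (∑ b : Fin P → Bool, f (fun μ => spin (b μ))) / 2 ^ P

lemma spin_not (x : Bool) : spin (!x) = -spin x := by cases x <;> simp [spin]

lemma spin_mul_self (x : Bool) : spin x * spin x = 1 := by cases x <;> simp [spin]

lemma sum_spin_mul_spin {P : ℕ} (ρ σ : Fin P) :
    ∑ b : Fin P → Bool, spin (b ρ) * spin (b σ) =
      if ρ = σ then (2 : ℝ) ^ P else 0 := by
  by_cases h : ρ = σ
  · subst h
    simp [spin_mul_self, Finset.card_univ, Fintype.card_fun]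
  · simp only [if_neg h]
    set F : (Fin P → Bool) → ℝ := fun b => spin (b ρ) * spin (b σ) with hF
    have hinv : Function.Involutive (fun b : Fin P → Bool =>
        Function.update b ρ (!(b ρ))) := by
      intro b
      funext τ
      by_cases hτ : τ = ρ
      · subst hτ; simp
      · simp [Function.update_of_ne hτ]
    have hswap : ∀ b, F (Function.update b ρ (!(b ρ))) = -F b := by
      intro b
      simp only [hF, Function.update_self, Function.update_of_ne (Ne.symm h), spin_not]
      ring
    have hsum : ∑ b : Fin P → Bool, F b
        = ∑ b : Fin P → Bool, F (Function.update b ρ (!(b ρ))) :=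
      (Fintype.sum_bijective _ hinv.bijective _ _ (fun b => rfl)).symm
    have h2 : ∑ b : Fin P → Bool, F (Function.update b ρ (!(b ρ)))
        = -∑ b : Fin P → Bool, F b := by
      simp [hswap]
    linarith [hsum, h2]

lemma sinh_le_mul_cosh {x : ℝ} (hx : 0 ≤ x) : Real.sinh x ≤ x * Real.cosh x := by
  have key : MonotoneOn (fun y : ℝ => y * Real.cosh y - Real.sinh y) (Set.Ici 0) := by
    have hderiv : ∀ y : ℝ, HasDerivAt (fun y : ℝ => y * Real.cosh y - Real.sinh y)
        (y * Real.sinh y) y := by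
      intro y
      have h1 : HasDerivAt (fun y : ℝ => y * Real.cosh y)
          (1 * Real.cosh y + y * Real.sinh y) y :=
        (hasDerivAt_id y).mul (Real.hasDerivAt_cosh y)
      have h2 := h1.sub (Real.hasDerivAt_sinh y)
      exact h2.congr_deriv (by ring)
    apply monotoneOn_of_deriv_nonneg (convex_Ici 0)
    · exact (Continuous.sub (continuous_id.mul Real.continuous_cosh)
        Real.continuous_sinh).continuousOn
    · intro y hy
      exact ((hderiv y).differentiableAt).differentiableWithinAt
    · intro y hy
      rw [(hderiv y).deriv]
      simp only [Set.mem_Ioi, interior_Ici, Set.mem_Ioi] at hy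
      exact mul_nonneg hy.le (Real.sinh_nonneg_iff.mpr hy.le)
  have := key (Set.self_mem_Ici) hx hx
  simpa using this

lemma abs_tanh_le (x : ℝ) : |Real.tanh x| ≤ |x| := by
  rcases le_total 0 x with hx | hx
  · rw [abs_of_nonneg hx, abs_of_nonneg]
    · rw [Real.tanh_eq_sinh_div_cosh]
      rw [div_le_iff₀ (Real.cosh_pos x)]
      exact sinh_le_mul_cosh hx
    · rw [Real.tanh_eq_sinh_div_cosh]
      exact div_nonneg (Real.sinh_nonneg_iff.mpr hx) (Real.cosh_pos x).le
  · rw [← abs_neg x, ← abs_neg (Real.tanh x), ← Real.tanh_neg]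
    rw [abs_of_nonneg (neg_nonneg.mpr hx), abs_of_nonneg]
    · rw [Real.tanh_eq_sinh_div_cosh, div_le_iff₀ (Real.cosh_pos (-x))]
      exact sinh_le_mul_cosh (neg_nonneg.mpr hx)
    · rw [Real.tanh_eq_sinh_div_cosh]
      exact div_nonneg (Real.sinh_nonneg_iff.mpr (neg_nonneg.mpr hx)) (Real.cosh_pos _).le

lemma mul_tanh_le (c x : ℝ) (hc : 0 ≤ c) : x * Real.tanh (c * x) ≤ c * x ^ 2 := by
  calc x * Real.tanh (c * x) ≤ |x * Real.tanh (c * x)| := le_abs_self _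
    _ = |x| * |Real.tanh (c * x)| := abs_mul _ _
    _ ≤ |x| * |c * x| := by
        exact mul_le_mul_of_nonneg_left (abs_tanh_le _) (abs_nonneg _)
    _ = c * x ^ 2 := by
        rw [abs_mul, abs_of_nonneg hc, ← sq_abs]; ring

lemma sum_sq_spin {P : ℕ} (p : Fin P → ℝ) :
    ∑ b : Fin P → Bool, (∑ ρ, spin (b ρ) * p ρ) ^ 2 = 2 ^ P * ∑ μ, p μ ^ 2 := by
  have step1 : ∀ b : Fin P → Bool, (∑ ρ, spin (b ρ) * p ρ) ^ 2
      = ∑ ρ, ∑ σ, (p ρ * p σ) * (spin (b ρ) * spin (b σ)) := by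
    intro b
    rw [sq, Finset.sum_mul_sum]
    apply Finset.sum_congr rfl; intro ρ _
    apply Finset.sum_congr rfl; intro σ _
    ring
  simp only [step1]
  rw [Finset.sum_comm]
  have step2 : ∀ ρ : Fin P, ∑ b : Fin P → Bool,
      ∑ σ, (p ρ * p σ) * (spin (b ρ) * spin (b σ)) = 2 ^ P * p ρ ^ 2 := by
    intro ρ
    rw [Finset.sum_comm]
    have : ∀ σ : Fin P, ∑ b : Fin P → Bool, (p ρ * p σ) * (spin (b ρ) * spin (b σ))
        = (p ρ * p σ) * (if ρ = σ then (2:ℝ) ^ P else 0) := by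
      intro σ
      rw [← Finset.mul_sum, sum_spin_mul_spin]
    simp only [this]
    rw [Finset.sum_eq_single ρ]
    · simp; ring
    · intro σ _ hσ; simp [Ne.symm hσ]
    · simp
  simp only [step2]
  rw [← Finset.mul_sum]

lemma dot_bound {P : ℕ} (c : ℝ) (hc : 0 ≤ c) (p : Fin P → ℝ) :
    ∑ μ, p μ * unifExp P (fun ξ => ξ μ * Real.tanh (c * ∑ ρ, ξ ρ * p ρ))
      ≤ c * ∑ μ, p μ ^ 2 := by
  have hrw : ∑ μ, p μ * unifExp P (fun ξ => ξ μ * Real.tanh (c * ∑ ρ, ξ ρ * p ρ))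
      = (∑ b : Fin P → Bool,
          (∑ ρ, spin (b ρ) * p ρ) * Real.tanh (c * ∑ ρ, spin (b ρ) * p ρ)) / 2 ^ P := by
    simp only [unifExp, ← mul_div_assoc, ← Finset.sum_div]
    congr 1
    simp only [Finset.mul_sum]
    rw [Finset.sum_comm]
    apply Finset.sum_congr rfl; intro b _
    rw [Finset.sum_mul]
    apply Finset.sum_congr rfl; intro μ _
    ring
  rw [hrw]
  have hle : (∑ b : Fin P → Bool,
      (∑ ρ, spin (b ρ) * p ρ) * Real.tanh (c * ∑ ρ, spin (b ρ) * p ρ))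
      ≤ ∑ b : Fin P → Bool, c * (∑ ρ, spin (b ρ) * p ρ) ^ 2 :=
    Finset.sum_le_sum fun b _ => mul_tanh_le c _ hc
  calc _ ≤ (∑ b : Fin P → Bool, c * (∑ ρ, spin (b ρ) * p ρ) ^ 2) / 2 ^ P := by
        apply div_le_div_of_nonneg_right hle
        positivity
    _ = c * ∑ μ, p μ ^ 2 := by
        rw [← Finset.mul_sum, sum_sq_spin]
        field_simp

/-- If `p` solves the three-layer RBM self-consistent equation
`p = ⟨ξ tanh(β ξ·p)⟩ + √γ ⟨η tanh((β/√γ) η·p)⟩`, then `|p|² ≤ 2β |p|²`. -/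
theorem stmt10 (P : ℕ) (hP : 1 ≤ P) (β γ : ℝ) (hβ : 0 ≤ β) (hγ : 0 < γ)
    (p : Fin P → ℝ)
    (hp : ∀ μ, p μ =
      unifExp P (fun ξ => ξ μ * Real.tanh (β * ∑ ρ, ξ ρ * p ρ))
      + Real.sqrt γ *
          unifExp P (fun η => η μ * Real.tanh ((β / Real.sqrt γ) * ∑ ρ, η ρ * p ρ))) :
    ∑ μ, p μ ^ 2 ≤ 2 * β * ∑ μ, p μ ^ 2 := by
  have hsγ : (0:ℝ) < Real.sqrt γ := Real.sqrt_pos.mpr hγ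
  have key1 := dot_bound β hβ p
  have key2 := dot_bound (β / Real.sqrt γ) (div_nonneg hβ hsγ.le) p
  have expand : ∑ μ, p μ ^ 2
      = (∑ μ, p μ * unifExp P (fun ξ => ξ μ * Real.tanh (β * ∑ ρ, ξ ρ * p ρ)))
      + Real.sqrt γ * (∑ μ, p μ *
          unifExp P (fun η => η μ * Real.tanh ((β / Real.sqrt γ) * ∑ ρ, η ρ * p ρ))) := by
    rw [Finset.mul_sum, ← Finset.sum_add_distrib]
    apply Finset.sum_congr rfl; intro μ _
    rw [sq]
    nth_rewrite 2 [hp μ]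
    ring
  have h2 : Real.sqrt γ * (∑ μ, p μ *
      unifExp P (fun η => η μ * Real.tanh ((β / Real.sqrt γ) * ∑ ρ, η ρ * p ρ)))
      ≤ β * ∑ μ, p μ ^ 2 := by
    calc _ ≤ Real.sqrt γ * ((β / Real.sqrt γ) * ∑ μ, p μ ^ 2) :=
          mul_le_mul_of_nonneg_left key2 hsγ.le
      _ = β * ∑ μ, p μ ^ 2 := by field_simp
  linarith [key1, h2]
end

section
/- Let ν ≥ 1, P ≥ 1, positive integers N_a with N = Σ_a N_a and α_a = N_a/N, patterns ξ^{μ,a} ∈ {−1,1}^{N_a}, reals k_a, β, c, and let P̂ be a ν×ν real matrix. For t ∈ ℝ and x ∈ ℝ^{ν×P} define Φ_N(t,x) = (1/N) ln Σ_{σ} exp{ (Nt/2) Σ_μ [ Σ_a k_a α_a² (m_a^μ)² + Σ_{a≠b} α_a α_b m_a^μ m_b^μ ] + (N(β−t)c/2) Σ_μ Σ_a k_a α_a² (m_a^μ)² + N Σ_μ Σ_a x_a^μ (P̂ m^μ)_a }, where m_a^μ = (1/N_a) Σ_i ξ_i^{μ,a} σ_i^a and m^μ = (m_1^μ,…,m_ν^μ).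 Then for every a, μ: ∂Φ_N/∂x_a^μ (t,x) = ⟨(P̂ m^μ)_a⟩_{(t,x)}, and if P̂ᵀP̂ = J^c := c·diag(k_1α_1²,…,k_να_ν²) − J (J being the matrix with J_{aa}=k_aα_a², J_{ab}=α_aα_b for a≠b), then ∂Φ_N/∂t (t,x) = −(1/2) Σ_{μ=1}^P Σ_{a=1}^ν ⟨((P̂ m^μ)_a)²⟩_{(t,x)}, where ⟨·⟩_{(t,x)} is the expectation with respect to the Boltzmann weight appearing inside the logarithm. -/
open Finset Matrix

lemma aux_exp {f : ℝ → ℝ} {f' s : ℝ} (K L : ℝ) (hf : HasDerivAt f f' s) :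
    HasDerivAt (fun y => Real.exp (K + L * f y)) (L * f' * Real.exp (K + L * f s)) s := by
  have h := ((hf.const_mul L).const_add K).exp
  convert h using 1
  ring

lemma aux_lin_exp (n β c S1 S2 C t : ℝ) :
    HasDerivAt (fun s => Real.exp (n * s / 2 * S1 + n * (β - s) * c / 2 * S2 + C))
      ((n / 2 * S1 - n * c / 2 * S2) * Real.exp (n * t / 2 * S1 + n * (β - t) * c / 2 * S2 + C)) t := by
  have h1 : HasDerivAt (fun s => (n / 2 * S1 - n * c / 2 * S2) * s + (n * β * c / 2 * S2 + C))
      (n / 2 * S1 - n * c / 2 * S2) t := by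
    simpa using ((hasDerivAt_id t).const_mul (n / 2 * S1 - n * c / 2 * S2)).add_const
      (n * β * c / 2 * S2 + C)
  have hfe : (fun s => Real.exp (n * s / 2 * S1 + n * (β - s) * c / 2 * S2 + C))
      = fun s => Real.exp ((n / 2 * S1 - n * c / 2 * S2) * s + (n * β * c / 2 * S2 + C)) :=
    funext fun s => congrArg Real.exp (by ring)
  have h3 : (n * t / 2 * S1 + n * (β - t) * c / 2 * S2 + C)
      = (n / 2 * S1 - n * c / 2 * S2) * t + (n * β * c / 2 * S2 + C) := by ring
  rw [hfe, h3]
  convert h1.exp using 1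
  ring

lemma sum_sq_mulVec {ν : ℕ} (α k : Fin ν → ℝ) (c : ℝ) (Phat : Matrix (Fin ν) (Fin ν) ℝ)
    (hPP : Phatᵀ * Phat = c • Matrix.diagonal (fun a => k a * α a ^ 2) - hopfieldJ ν α k)
    (v : Fin ν → ℝ) :
    ∑ a, Phat.mulVec v a ^ 2 =
      c * ∑ a, k a * α a ^ 2 * v a ^ 2 -
        (∑ a, k a * α a ^ 2 * v a ^ 2 +
          ∑ a, ∑ b ∈ Finset.univ.filter (fun b => b ≠ a), α a * α b * v a * v b) := by
  classical
  have hentry : ∀ b b', (∑ a, Phat a b * Phat a b') =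
      (if b = b' then c * (k b * α b ^ 2) - k b * α b ^ 2 else -(α b * α b')) := by
    intro b b'
    have h := congrFun (congrFun hPP b) b'
    simp only [Matrix.mul_apply, Matrix.transpose_apply, Matrix.sub_apply, Matrix.smul_apply,
      Matrix.diagonal_apply, hopfieldJ, Matrix.of_apply, smul_eq_mul, mul_ite, mul_zero] at h
    rw [h]
    by_cases hbb : b = b' <;> simp [hbb]
  calc ∑ a, Phat.mulVec v a ^ 2
      = ∑ a, ∑ b, ∑ b', (Phat a b * v b) * (Phat a b' * v b') := by
        refine Finset.sum_congr rfl fun a _ => ?_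
        rw [sq, Matrix.mulVec, dotProduct, Finset.sum_mul_sum]
    _ = ∑ b, ∑ b', (∑ a, Phat a b * Phat a b') * (v b * v b') := by
        rw [Finset.sum_comm]
        refine Finset.sum_congr rfl fun b _ => ?_
        rw [Finset.sum_comm]
        refine Finset.sum_congr rfl fun b' _ => ?_
        rw [Finset.sum_mul]
        exact Finset.sum_congr rfl fun a _ => by ring
    _ = ∑ b, ((c * (k b * α b ^ 2) - k b * α b ^ 2) * (v b * v b)
          + ∑ b' ∈ Finset.univ.erase b, -(α b * α b') * (v b * v b')) := by
        refine Finset.sum_congr rfl fun b _ => ?_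
        rw [← Finset.add_sum_erase _ _ (Finset.mem_univ b), hentry b b, if_pos rfl]
        congr 1
        refine Finset.sum_congr rfl fun b' hb' => ?_
        rw [hentry b b', if_neg (Ne.symm (Finset.ne_of_mem_erase hb'))]
    _ = c * ∑ a, k a * α a ^ 2 * v a ^ 2 -
        (∑ a, k a * α a ^ 2 * v a ^ 2 +
          ∑ a, ∑ b ∈ Finset.univ.filter (fun b => b ≠ a), α a * α b * v a * v b) := by
        simp only [Finset.filter_ne']
        rw [Finset.sum_add_distrib]
        have e1 : (∑ x, (c * (k x * α x ^ 2) - k x * α x ^ 2) * (v x * v x))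
            = c * (∑ a, k a * α a ^ 2 * v a ^ 2) - ∑ a, k a * α a ^ 2 * v a ^ 2 := by
          rw [Finset.mul_sum, ← Finset.sum_sub_distrib]
          exact Finset.sum_congr rfl fun a _ => by ring
        have e2 : (∑ x, ∑ b' ∈ Finset.univ.erase x, -(α x * α b') * (v x * v b'))
            = -∑ x, ∑ b' ∈ Finset.univ.erase x, α x * α b' * v x * v b' := by
          rw [← Finset.sum_neg_distrib]
          refine Finset.sum_congr rfl fun x _ => ?_
          rw [← Finset.sum_neg_distrib]
          exact Finset.sum_congr rfl fun b _ => by ring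
        rw [e1, e2]
        ring

/-- Space and time derivatives of the Guerra-type interpolating pressure `Φ_N` of the
multi-species Hopfield model. -/
theorem stmt15 (ν P : ℕ) (hν : 1 ≤ ν) (hP : 1 ≤ P)
    (Nsz : Fin ν → ℕ) (hNsz : ∀ a, 1 ≤ Nsz a)
    (N : ℕ) (hN : N = ∑ a, Nsz a)
    (α : Fin ν → ℝ) (hα : ∀ a, α a = (Nsz a : ℝ) / (N : ℝ))
    (ξ : Fin P → (a : Fin ν) → Fin (Nsz a) → ℝ)
    (hξ : ∀ μ a i, ξ μ a i = 1 ∨ ξ μ a i = -1)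
    (k : Fin ν → ℝ) (β c : ℝ)
    (Phat : Matrix (Fin ν) (Fin ν) ℝ)
    -- group Mattis magnetizations
    (m : ((a : Fin ν) → Fin (Nsz a) → Bool) → Fin ν → Fin P → ℝ)
    (hm : ∀ σ a μ, m σ a μ =
      (1 / (Nsz a : ℝ)) * ∑ i, ξ μ a i * (if σ a i then (1 : ℝ) else -1))
    -- interpolating Boltzmann factor
    (B : ℝ → (Fin ν → Fin P → ℝ) → ((a : Fin ν) → Fin (Nsz a) → Bool) → ℝ)
    (hB : ∀ t x σ, B t x σ = Real.exp (
      (N : ℝ) * t / 2 * ∑ μ, (∑ a, k a * α a ^ 2 * m σ a μ ^ 2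
        + ∑ a, ∑ b ∈ Finset.univ.filter (fun b => b ≠ a),
            α a * α b * m σ a μ * m σ b μ)
      + (N : ℝ) * (β - t) * c / 2 * ∑ μ, ∑ a, k a * α a ^ 2 * m σ a μ ^ 2
      + (N : ℝ) * ∑ μ, ∑ a, x a μ * Phat.mulVec (fun b => m σ b μ) a))
    -- interpolating pressure
    (Φ : ℝ → (Fin ν → Fin P → ℝ) → ℝ)
    (hΦ : ∀ t x, Φ t x =
      (1 / (N : ℝ)) * Real.log (∑ σ : (a : Fin ν) → Fin (Nsz a) → Bool, B t x σ))
    -- Boltzmann–Gibbs expectation associated to `B t x`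
    (avg : ℝ → (Fin ν → Fin P → ℝ) → (((a : Fin ν) → Fin (Nsz a) → Bool) → ℝ) → ℝ)
    (havg : ∀ t x O, avg t x O =
      (∑ σ : (a : Fin ν) → Fin (Nsz a) → Bool, O σ * B t x σ) /
        (∑ σ : (a : Fin ν) → Fin (Nsz a) → Bool, B t x σ)) :
    (∀ (t : ℝ) (x : Fin ν → Fin P → ℝ) (a : Fin ν) (μ : Fin P),
      HasDerivAt (fun s : ℝ => Φ t (Function.update x a (Function.update (x a) μ s)))
        (avg t x (fun σ => Phat.mulVec (fun b => m σ b μ) a)) (x a μ)) ∧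
    (Phatᵀ * Phat = c • Matrix.diagonal (fun a => k a * α a ^ 2) - hopfieldJ ν α k →
      ∀ (t : ℝ) (x : Fin ν → Fin P → ℝ),
        HasDerivAt (fun s : ℝ => Φ s x)
          (-(1 / 2) * ∑ μ, ∑ a, avg t x (fun σ => Phat.mulVec (fun b => m σ b μ) a ^ 2))
          t) := by
  classical
  have hNe : Nonempty (Fin ν) := ⟨⟨0, hν⟩⟩
  have hN0 : 0 < N := by
    rw [hN]; exact Finset.sum_pos (fun a _ => hNsz a) Finset.univ_nonempty
  have hNR : (N : ℝ) ≠ 0 := Nat.cast_ne_zero.mpr hN0.ne'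
  have hBpos : ∀ t x σ, 0 < B t x σ := fun t x σ => by rw [hB]; exact Real.exp_pos _
  have hZpos : ∀ t x, 0 < ∑ σ : (a : Fin ν) → Fin (Nsz a) → Bool, B t x σ := fun t x =>
    Finset.sum_pos (fun σ _ => hBpos t x σ) Finset.univ_nonempty
  constructor
  · intro t x a μ
    have hupd : Function.update x a (Function.update (x a) μ (x a μ)) = x := by
      rw [Function.update_eq_self, Function.update_eq_self]
    have hsum : ∀ σ, HasDerivAt
        (fun s => ∑ μ', ∑ a', Function.update x a (Function.update (x a) μ s) a' μ' *
          Phat.mulVec (fun b => m σ b μ') a')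
        (Phat.mulVec (fun b => m σ b μ) a) (x a μ) := by
      intro σ
      have h1 : ∀ (μ' : Fin P) (a' : Fin ν), HasDerivAt
          (fun s => Function.update x a (Function.update (x a) μ s) a' μ' *
            Phat.mulVec (fun b => m σ b μ') a')
          (if μ' = μ then (if a' = a then Phat.mulVec (fun b => m σ b μ) a else 0) else 0)
          (x a μ) := by
        intro μ' a'
        by_cases ha' : a' = a
        · subst ha'
          by_cases hμ' : μ' = μ
          · subst hμ'
            simp only [Function.update_self, if_pos rfl]
            simpa using (hasDerivAt_id (x a' μ')).mul_const (Phat.mulVec (fun b => m σ b μ') a')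
          · simp only [Function.update_self, Function.update_of_ne hμ', hμ', if_false]
            exact hasDerivAt_const _ _
        · simp only [Function.update_of_ne ha', ha', if_false, ite_self]
          exact hasDerivAt_const _ _
      have h2 := HasDerivAt.fun_sum (u := Finset.univ)
        (fun μ' _ => HasDerivAt.fun_sum (u := Finset.univ) (fun a' _ => h1 μ' a'))
      have h3 : (∑ μ' : Fin P, ∑ a' : Fin ν,
          if μ' = μ then (if a' = a then Phat.mulVec (fun b => m σ b μ) a else 0) else 0)
          = Phat.mulVec (fun b => m σ b μ) a := by
        have h4 : ∀ μ' : Fin P, (∑ a' : Fin ν,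
            if μ' = μ then (if a' = a then Phat.mulVec (fun b => m σ b μ) a else 0) else 0)
            = if μ' = μ then Phat.mulVec (fun b => m σ b μ) a else 0 := by
          intro μ'; split_ifs with h <;> simp
        rw [Finset.sum_congr rfl fun μ' _ => h4 μ']
        simp
      rw [← h3]
      exact h2
    have hBder : ∀ σ, HasDerivAt
        (fun s => B t (Function.update x a (Function.update (x a) μ s)) σ)
        ((N : ℝ) * Phat.mulVec (fun b => m σ b μ) a * B t x σ) (x a μ) := by
      intro σ
      rw [show B t x σ = B t (Function.update x a (Function.update (x a) μ (x a μ))) σ by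
        rw [hupd]]
      simp only [hB]
      exact aux_exp _ _ (hsum σ)
    have hZder := HasDerivAt.fun_sum (u := Finset.univ) (fun σ _ => hBder σ)
    have hZne : (∑ σ : (a : Fin ν) → Fin (Nsz a) → Bool,
        B t (Function.update x a (Function.update (x a) μ (x a μ))) σ) ≠ 0 := by
      rw [hupd]; exact (hZpos t x).ne'
    have hlog := (hZder.log hZne).const_mul (1 / (N : ℝ))
    simp only [hΦ]
    refine hlog.congr_deriv (Eq.symm ?_)
    rw [havg, hupd]
    rw [show (∑ σ : (a : Fin ν) → Fin (Nsz a) → Bool,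
        (N : ℝ) * Phat.mulVec (fun b => m σ b μ) a * B t x σ)
        = (N : ℝ) * ∑ σ : (a : Fin ν) → Fin (Nsz a) → Bool,
          Phat.mulVec (fun b => m σ b μ) a * B t x σ by
      rw [Finset.mul_sum]; exact Finset.sum_congr rfl fun σ _ => by ring]
    field_simp
  · intro hPP t x
    have hkey : ∀ σ : (a : Fin ν) → Fin (Nsz a) → Bool,
        (∑ μ, ∑ a, Phat.mulVec (fun b => m σ b μ) a ^ 2)
        = c * (∑ μ, ∑ a, k a * α a ^ 2 * m σ a μ ^ 2)
          - (∑ μ, (∑ a, k a * α a ^ 2 * m σ a μ ^ 2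
            + ∑ a, ∑ b ∈ Finset.univ.filter (fun b => b ≠ a),
                α a * α b * m σ a μ * m σ b μ)) := by
      intro σ
      rw [Finset.mul_sum, ← Finset.sum_sub_distrib]
      refine Finset.sum_congr rfl fun μ _ => ?_
      simpa using sum_sq_mulVec α k c Phat hPP (fun b => m σ b μ)
    have hBder : ∀ σ : (a : Fin ν) → Fin (Nsz a) → Bool, HasDerivAt (fun s => B s x σ)
        (((N : ℝ) / 2 * (∑ μ, (∑ a, k a * α a ^ 2 * m σ a μ ^ 2
          + ∑ a, ∑ b ∈ Finset.univ.filter (fun b => b ≠ a),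
              α a * α b * m σ a μ * m σ b μ))
          - (N : ℝ) * c / 2 * (∑ μ, ∑ a, k a * α a ^ 2 * m σ a μ ^ 2)) * B t x σ) t := by
      intro σ
      simp only [hB]
      exact aux_lin_exp _ _ _ _ _ _ _
    have hZder := HasDerivAt.fun_sum (u := Finset.univ) (fun σ _ => hBder σ)
    have hlog := (hZder.log (hZpos t x).ne').const_mul (1 / (N : ℝ))
    simp only [hΦ]
    refine hlog.congr_deriv (Eq.symm ?_)
    simp only [havg]
    have h2 : (∑ μ, ∑ a, ((∑ σ : (a : Fin ν) → Fin (Nsz a) → Bool,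
          Phat.mulVec (fun b => m σ b μ) a ^ 2 * B t x σ) /
          (∑ σ : (a : Fin ν) → Fin (Nsz a) → Bool, B t x σ)))
        = (∑ σ : (a : Fin ν) → Fin (Nsz a) → Bool,
            (∑ μ, ∑ a, Phat.mulVec (fun b => m σ b μ) a ^ 2) * B t x σ) /
          (∑ σ : (a : Fin ν) → Fin (Nsz a) → Bool, B t x σ) := by
      simp only [← Finset.sum_div]
      congr 1
      calc (∑ μ, ∑ a, ∑ σ : (a : Fin ν) → Fin (Nsz a) → Bool,
              Phat.mulVec (fun b => m σ b μ) a ^ 2 * B t x σ)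
          = ∑ μ, ∑ σ : (a : Fin ν) → Fin (Nsz a) → Bool, ∑ a,
              Phat.mulVec (fun b => m σ b μ) a ^ 2 * B t x σ :=
            Finset.sum_congr rfl fun μ _ => Finset.sum_comm
        _ = ∑ σ : (a : Fin ν) → Fin (Nsz a) → Bool, ∑ μ, ∑ a,
              Phat.mulVec (fun b => m σ b μ) a ^ 2 * B t x σ := Finset.sum_comm
        _ = ∑ σ : (a : Fin ν) → Fin (Nsz a) → Bool,
              (∑ μ, ∑ a, Phat.mulVec (fun b => m σ b μ) a ^ 2) * B t x σ := by
            refine Finset.sum_congr rfl fun σ _ => ?_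
            simp only [Finset.sum_mul]
    have h1 : (∑ σ : (a : Fin ν) → Fin (Nsz a) → Bool,
          ((N : ℝ) / 2 * (∑ μ, (∑ a, k a * α a ^ 2 * m σ a μ ^ 2
            + ∑ a, ∑ b ∈ Finset.univ.filter (fun b => b ≠ a),
                α a * α b * m σ a μ * m σ b μ))
            - (N : ℝ) * c / 2 * (∑ μ, ∑ a, k a * α a ^ 2 * m σ a μ ^ 2)) * B t x σ)
        = (N : ℝ) * (-(1 / 2)) * ∑ σ : (a : Fin ν) → Fin (Nsz a) → Bool,
            (∑ μ, ∑ a, Phat.mulVec (fun b => m σ b μ) a ^ 2) * B t x σ := by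
      rw [Finset.mul_sum]
      refine Finset.sum_congr rfl fun σ _ => ?_
      rw [hkey σ]
      ring
    rw [h2, h1]
    field_simp
end

section
/- With the notation of the interpolating pressure Φ_N(t,x) (with P̂ᵀP̂ = J^c), Φ_N satisfies at every (t,x) the Hamilton–Jacobi equation ∂_t Φ_N(t,x) + (1/2) Σ_{μ=1}^P Σ_{a=1}^ν ( ∂Φ_N/∂x_a^μ (t,x) )² + V_N(t,x) = 0, where V_N(t,x) = (1/2) Σ_{μ=1}^P Σ_{a=1}^ν [ ⟨((P̂ m^μ)_a)²⟩_{(t,x)} − ⟨(P̂ m^μ)_a⟩_{(t,x)}² ] is the sum of the fluctuations of the rotated magnetizations. -/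
open Finset Matrix

lemma auxDerivLogSum {S : Type*} [Fintype S] [Nonempty S] (NN : ℝ) (g h : S → ℝ) (t₀ : ℝ) :
    HasDerivAt (fun t => (1 / NN) * Real.log (∑ σ, Real.exp (g σ + t * h σ)))
      ((1 / NN) * ((∑ σ, h σ * Real.exp (g σ + t₀ * h σ)) /
        (∑ σ, Real.exp (g σ + t₀ * h σ)))) t₀ := by
  have hpos : 0 < ∑ σ : S, Real.exp (g σ + t₀ * h σ) :=
    Finset.sum_pos (fun σ _ => Real.exp_pos _) Finset.univ_nonempty
  have hsum : HasDerivAt (fun t => ∑ σ : S, Real.exp (g σ + t * h σ))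
      (∑ σ : S, h σ * Real.exp (g σ + t₀ * h σ)) t₀ := by
    apply HasDerivAt.fun_sum
    intro σ _
    have h1 : HasDerivAt (fun t : ℝ => g σ + t * h σ) (h σ) t₀ := by
      simpa using ((hasDerivAt_id t₀).mul_const (h σ)).const_add (g σ)
    simpa [mul_comm] using h1.exp
  exact (hsum.log (ne_of_gt hpos)).const_mul (1 / NN)

lemma auxQuad {ν : ℕ} (M : Matrix (Fin ν) (Fin ν) ℝ) (v : Fin ν → ℝ) :
    ∑ a, (M.mulVec v a) ^ 2 = ∑ b, ∑ b', (Mᵀ * M) b b' * (v b * v b') := by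
  simp only [Matrix.mulVec, dotProduct, Matrix.mul_apply, Matrix.transpose_apply, sq,
    Finset.sum_mul, Finset.mul_sum]
  rw [Finset.sum_comm]
  refine Finset.sum_congr rfl fun b _ => ?_
  rw [Finset.sum_comm]
  refine Finset.sum_congr rfl fun b' _ => ?_
  exact Finset.sum_congr rfl fun a _ => by ring

lemma auxQuad2 {ν : ℕ} (α k : Fin ν → ℝ) (c : ℝ) (M : Matrix (Fin ν) (Fin ν) ℝ)
    (hPP : Mᵀ * M = c • Matrix.diagonal (fun a => k a * α a ^ 2) - hopfieldJ ν α k)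
    (v : Fin ν → ℝ) :
    ∑ a, (M.mulVec v a) ^ 2 =
      c * ∑ a, k a * α a ^ 2 * v a ^ 2
      - (∑ a, k a * α a ^ 2 * v a ^ 2
         + ∑ a, ∑ b ∈ Finset.univ.filter (fun b => b ≠ a), α a * α b * v a * v b) := by
  rw [auxQuad, hPP]
  have hJ : ∀ b : Fin ν, ∑ b', (hopfieldJ ν α k) b b' * (v b * v b')
      = k b * α b ^ 2 * v b ^ 2
        + ∑ b' ∈ Finset.univ.filter (fun b' => b' ≠ b), α b * α b' * v b * v b' := by
    intro b
    rw [Finset.filter_ne', ← Finset.add_sum_erase _ (fun b' => (hopfieldJ ν α k) b b' * (v b * v b')) (Finset.mem_univ b)]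
    congr 1
    · simp only [hopfieldJ, Matrix.of_apply, eq_self_iff_true, if_true]; ring
    · refine Finset.sum_congr rfl fun b' hb' => ?_
      have : b ≠ b' := fun h => (Finset.mem_erase.mp hb').1 h.symm
      simp only [hopfieldJ, Matrix.of_apply, if_neg this]
      ring
  have hD : ∀ b : Fin ν, ∑ b', (c • Matrix.diagonal (fun a => k a * α a ^ 2)) b b' * (v b * v b')
      = c * (k b * α b ^ 2 * v b ^ 2) := by
    intro b
    simp [Matrix.diagonal_apply, mul_ite, ite_mul, Finset.sum_ite_eq]
    ring
  simp only [Matrix.sub_apply, sub_mul, Finset.sum_sub_distrib, hJ, hD]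
  rw [Finset.sum_add_distrib, ← Finset.mul_sum]

lemma auxUpdate {ν Q : ℕ} (x : Fin ν → Fin Q → ℝ) (a : Fin ν) (μ : Fin Q) (s : ℝ)
    (X : Fin Q → Fin ν → ℝ) :
    ∑ μ', ∑ a', (Function.update x a (Function.update (x a) μ s)) a' μ' * X μ' a'
      = (∑ μ', ∑ a', x a' μ' * X μ' a') + (s - x a μ) * X μ a := by
  have hpt : ∀ (a' : Fin ν) (μ' : Fin Q),
      Function.update x a (Function.update (x a) μ s) a' μ'
        = x a' μ' + (if a' = a ∧ μ' = μ then s - x a μ else 0) := by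
    intro a' μ'
    by_cases h1 : a' = a
    · subst h1
      by_cases h2 : μ' = μ
      · subst h2; simp
      · simp [Function.update_apply, h2]
    · simp [Function.update_apply, h1]
  simp only [hpt, add_mul, Finset.sum_add_distrib]
  congr 1
  have h3 : ∀ μ' : Fin Q, ∑ a', (if a' = a ∧ μ' = μ then s - x a μ else 0) * X μ' a'
      = if μ' = μ then (s - x a μ) * X μ' a else 0 := by
    intro μ'
    by_cases h : μ' = μ <;> simp [h, ite_mul]
  simp only [h3]
  simp

lemma auxScal1 (NN M Z : ℝ) (hNN : NN ≠ 0) (hZ : Z ≠ 0) :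
    1 / NN * (NN * (-(1 / 2)) * M / Z) = -(1 / 2) * (M / Z) := by
  field_simp

lemma auxScal2 (NN M Z : ℝ) (hNN : NN ≠ 0) (hZ : Z ≠ 0) :
    1 / NN * (NN * M / Z) = M / Z := by
  field_simp

set_option maxHeartbeats 2000000 in
lemma master {S : Type*} [Fintype S] [Nonempty S] {ν Q : ℕ}
    (NN : ℝ) (hNN : NN ≠ 0) (α k : Fin ν → ℝ) (β c : ℝ)
    (Phat : Matrix (Fin ν) (Fin ν) ℝ)
    (hPP : Phatᵀ * Phat = c • Matrix.diagonal (fun a => k a * α a ^ 2) - hopfieldJ ν α k)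
    (mm : S → Fin ν → Fin Q → ℝ) (t : ℝ) (x : Fin ν → Fin Q → ℝ) :
    deriv (fun s : ℝ => 1 / NN * Real.log (∑ σ : S, Real.exp (NN * s / 2 * (∑ μ1, (∑ a1, k a1 * α a1 ^ 2 * mm σ a1 μ1 ^ 2 + ∑ a1, ∑ b1 ∈ Finset.univ.filter (fun b1 => b1 ≠ a1), α a1 * α b1 * mm σ a1 μ1 * mm σ b1 μ1)) + NN * (β - s) * c / 2 * (∑ μ1, ∑ a1, k a1 * α a1 ^ 2 * mm σ a1 μ1 ^ 2) + NN * (∑ μ1, ∑ a1, x a1 μ1 * Phat.mulVec (fun b => mm σ b μ1) a1)))) t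
    + 1 / 2 * ∑ μ, ∑ a, (deriv (fun s : ℝ => 1 / NN * Real.log (∑ σ : S,
        Real.exp (NN * t / 2 * (∑ μ1, (∑ a1, k a1 * α a1 ^ 2 * mm σ a1 μ1 ^ 2 + ∑ a1, ∑ b1 ∈ Finset.univ.filter (fun b1 => b1 ≠ a1), α a1 * α b1 * mm σ a1 μ1 * mm σ b1 μ1)) + NN * (β - t) * c / 2 * (∑ μ1, ∑ a1, k a1 * α a1 ^ 2 * mm σ a1 μ1 ^ 2) + NN * (∑ μ1, ∑ a1, (Function.update x a (Function.update (x a) μ s)) a1 μ1 * Phat.mulVec (fun b => mm σ b μ1) a1)))) (x a μ)) ^ 2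
    + 1 / 2 * ∑ μ, ∑ a,
        ((∑ σ : S, Phat.mulVec (fun b => mm σ b μ) a ^ 2 * Real.exp (NN * t / 2 * (∑ μ1, (∑ a1, k a1 * α a1 ^ 2 * mm σ a1 μ1 ^ 2 + ∑ a1, ∑ b1 ∈ Finset.univ.filter (fun b1 => b1 ≠ a1), α a1 * α b1 * mm σ a1 μ1 * mm σ b1 μ1)) + NN * (β - t) * c / 2 * (∑ μ1, ∑ a1, k a1 * α a1 ^ 2 * mm σ a1 μ1 ^ 2) + NN * (∑ μ1, ∑ a1, x a1 μ1 * Phat.mulVec (fun b => mm σ b μ1) a1))) / (∑ σ : S, Real.exp (NN * t / 2 * (∑ μ1, (∑ a1, k a1 * α a1 ^ 2 * mm σ a1 μ1 ^ 2 + ∑ a1, ∑ b1 ∈ Finset.univ.filter (fun b1 => b1 ≠ a1), α a1 * α b1 * mm σ a1 μ1 * mm σ b1 μ1)) + NN * (β - t) * c / 2 * (∑ μ1, ∑ a1, k a1 * α a1 ^ 2 * mm σ a1 μ1 ^ 2) + NN * (∑ μ1, ∑ a1, x a1 μ1 * Phat.mulVec (fun b => mm σ b μ1) a1)))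
         - ((∑ σ : S, Phat.mulVec (fun b => mm σ b μ) a * Real.exp (NN * t / 2 * (∑ μ1, (∑ a1, k a1 * α a1 ^ 2 * mm σ a1 μ1 ^ 2 + ∑ a1, ∑ b1 ∈ Finset.univ.filter (fun b1 => b1 ≠ a1), α a1 * α b1 * mm σ a1 μ1 * mm σ b1 μ1)) + NN * (β - t) * c / 2 * (∑ μ1, ∑ a1, k a1 * α a1 ^ 2 * mm σ a1 μ1 ^ 2) + NN * (∑ μ1, ∑ a1, x a1 μ1 * Phat.mulVec (fun b => mm σ b μ1) a1))) / (∑ σ : S, Real.exp (NN * t / 2 * (∑ μ1, (∑ a1, k a1 * α a1 ^ 2 * mm σ a1 μ1 ^ 2 + ∑ a1, ∑ b1 ∈ Finset.univ.filter (fun b1 => b1 ≠ a1), α a1 * α b1 * mm σ a1 μ1 * mm σ b1 μ1)) + NN * (β - t) * c / 2 * (∑ μ1, ∑ a1, k a1 * α a1 ^ 2 * mm σ a1 μ1 ^ 2) + NN * (∑ μ1, ∑ a1, x a1 μ1 * Phat.mulVec (fun b => mm σ b μ1) a1)))) ^ 2)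
    = 0 := by
  have hZne : (∑ σ : S, Real.exp (NN * t / 2 * (∑ μ1, (∑ a1, k a1 * α a1 ^ 2 * mm σ a1 μ1 ^ 2 + ∑ a1, ∑ b1 ∈ Finset.univ.filter (fun b1 => b1 ≠ a1), α a1 * α b1 * mm σ a1 μ1 * mm σ b1 μ1)) + NN * (β - t) * c / 2 * (∑ μ1, ∑ a1, k a1 * α a1 ^ 2 * mm σ a1 μ1 ^ 2) + NN * (∑ μ1, ∑ a1, x a1 μ1 * Phat.mulVec (fun b => mm σ b μ1) a1))) ≠ 0 :=
    ne_of_gt (Finset.sum_pos (fun σ _ => Real.exp_pos _) Finset.univ_nonempty)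
  -- the t-derivative
  have hfunT : (fun s : ℝ => 1 / NN * Real.log (∑ σ : S, Real.exp (NN * s / 2 * (∑ μ1, (∑ a1, k a1 * α a1 ^ 2 * mm σ a1 μ1 ^ 2 + ∑ a1, ∑ b1 ∈ Finset.univ.filter (fun b1 => b1 ≠ a1), α a1 * α b1 * mm σ a1 μ1 * mm σ b1 μ1)) + NN * (β - s) * c / 2 * (∑ μ1, ∑ a1, k a1 * α a1 ^ 2 * mm σ a1 μ1 ^ 2) + NN * (∑ μ1, ∑ a1, x a1 μ1 * Phat.mulVec (fun b => mm σ b μ1) a1))))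
      = (fun s : ℝ => 1 / NN * Real.log (∑ σ : S, Real.exp ((NN * β * c / 2 * (∑ μ1, ∑ a1, k a1 * α a1 ^ 2 * mm σ a1 μ1 ^ 2) + NN * (∑ μ1, ∑ a1, x a1 μ1 * Phat.mulVec (fun b => mm σ b μ1) a1)) + s * (NN / 2 * (∑ μ1, (∑ a1, k a1 * α a1 ^ 2 * mm σ a1 μ1 ^ 2 + ∑ a1, ∑ b1 ∈ Finset.univ.filter (fun b1 => b1 ≠ a1), α a1 * α b1 * mm σ a1 μ1 * mm σ b1 μ1)) - NN * c / 2 * (∑ μ1, ∑ a1, k a1 * α a1 ^ 2 * mm σ a1 μ1 ^ 2))))) := by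
    funext s
    exact congrArg _ (congrArg Real.log (Finset.sum_congr rfl fun σ _ =>
      congrArg Real.exp (by ring)))
  have hdT : deriv (fun s : ℝ => 1 / NN * Real.log (∑ σ : S, Real.exp ((NN * β * c / 2 * (∑ μ1, ∑ a1, k a1 * α a1 ^ 2 * mm σ a1 μ1 ^ 2) + NN * (∑ μ1, ∑ a1, x a1 μ1 * Phat.mulVec (fun b => mm σ b μ1) a1)) + s * (NN / 2 * (∑ μ1, (∑ a1, k a1 * α a1 ^ 2 * mm σ a1 μ1 ^ 2 + ∑ a1, ∑ b1 ∈ Finset.univ.filter (fun b1 => b1 ≠ a1), α a1 * α b1 * mm σ a1 μ1 * mm σ b1 μ1)) - NN * c / 2 * (∑ μ1, ∑ a1, k a1 * α a1 ^ 2 * mm σ a1 μ1 ^ 2))))) t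
      = 1 / NN * ((∑ σ : S, (NN / 2 * (∑ μ1, (∑ a1, k a1 * α a1 ^ 2 * mm σ a1 μ1 ^ 2 + ∑ a1, ∑ b1 ∈ Finset.univ.filter (fun b1 => b1 ≠ a1), α a1 * α b1 * mm σ a1 μ1 * mm σ b1 μ1)) - NN * c / 2 * (∑ μ1, ∑ a1, k a1 * α a1 ^ 2 * mm σ a1 μ1 ^ 2)) * Real.exp ((NN * β * c / 2 * (∑ μ1, ∑ a1, k a1 * α a1 ^ 2 * mm σ a1 μ1 ^ 2) + NN * (∑ μ1, ∑ a1, x a1 μ1 * Phat.mulVec (fun b => mm σ b μ1) a1)) + t * (NN / 2 * (∑ μ1, (∑ a1, k a1 * α a1 ^ 2 * mm σ a1 μ1 ^ 2 + ∑ a1, ∑ b1 ∈ Finset.univ.filter (fun b1 => b1 ≠ a1), α a1 * α b1 * mm σ a1 μ1 * mm σ b1 μ1)) - NN * c / 2 * (∑ μ1, ∑ a1, k a1 * α a1 ^ 2 * mm σ a1 μ1 ^ 2)))) /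
          (∑ σ : S, Real.exp ((NN * β * c / 2 * (∑ μ1, ∑ a1, k a1 * α a1 ^ 2 * mm σ a1 μ1 ^ 2) + NN * (∑ μ1, ∑ a1, x a1 μ1 * Phat.mulVec (fun b => mm σ b μ1) a1)) + t * (NN / 2 * (∑ μ1, (∑ a1, k a1 * α a1 ^ 2 * mm σ a1 μ1 ^ 2 + ∑ a1, ∑ b1 ∈ Finset.univ.filter (fun b1 => b1 ≠ a1), α a1 * α b1 * mm σ a1 μ1 * mm σ b1 μ1)) - NN * c / 2 * (∑ μ1, ∑ a1, k a1 * α a1 ^ 2 * mm σ a1 μ1 ^ 2))))) :=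
    (auxDerivLogSum NN (fun σ => (NN * β * c / 2 * (∑ μ1, ∑ a1, k a1 * α a1 ^ 2 * mm σ a1 μ1 ^ 2) + NN * (∑ μ1, ∑ a1, x a1 μ1 * Phat.mulVec (fun b => mm σ b μ1) a1))) (fun σ => (NN / 2 * (∑ μ1, (∑ a1, k a1 * α a1 ^ 2 * mm σ a1 μ1 ^ 2 + ∑ a1, ∑ b1 ∈ Finset.univ.filter (fun b1 => b1 ≠ a1), α a1 * α b1 * mm σ a1 μ1 * mm σ b1 μ1)) - NN * c / 2 * (∑ μ1, ∑ a1, k a1 * α a1 ^ 2 * mm σ a1 μ1 ^ 2))) t).deriv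
  have hexpT : ∀ σ : S, Real.exp ((NN * β * c / 2 * (∑ μ1, ∑ a1, k a1 * α a1 ^ 2 * mm σ a1 μ1 ^ 2) + NN * (∑ μ1, ∑ a1, x a1 μ1 * Phat.mulVec (fun b => mm σ b μ1) a1)) + t * (NN / 2 * (∑ μ1, (∑ a1, k a1 * α a1 ^ 2 * mm σ a1 μ1 ^ 2 + ∑ a1, ∑ b1 ∈ Finset.univ.filter (fun b1 => b1 ≠ a1), α a1 * α b1 * mm σ a1 μ1 * mm σ b1 μ1)) - NN * c / 2 * (∑ μ1, ∑ a1, k a1 * α a1 ^ 2 * mm σ a1 μ1 ^ 2))) = Real.exp (NN * t / 2 * (∑ μ1, (∑ a1, k a1 * α a1 ^ 2 * mm σ a1 μ1 ^ 2 + ∑ a1, ∑ b1 ∈ Finset.univ.filter (fun b1 => b1 ≠ a1), α a1 * α b1 * mm σ a1 μ1 * mm σ b1 μ1)) + NN * (β - t) * c / 2 * (∑ μ1, ∑ a1, k a1 * α a1 ^ 2 * mm σ a1 μ1 ^ 2) + NN * (∑ μ1, ∑ a1, x a1 μ1 * Phat.mulVec (fun b => mm σ b μ1) a1)) :=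
    fun σ => congrArg Real.exp (by ring)
  have hTval : ∀ σ : S, (NN / 2 * (∑ μ1, (∑ a1, k a1 * α a1 ^ 2 * mm σ a1 μ1 ^ 2 + ∑ a1, ∑ b1 ∈ Finset.univ.filter (fun b1 => b1 ≠ a1), α a1 * α b1 * mm σ a1 μ1 * mm σ b1 μ1)) - NN * c / 2 * (∑ μ1, ∑ a1, k a1 * α a1 ^ 2 * mm σ a1 μ1 ^ 2))
      = NN * (-(1 / 2) * ∑ μ, ∑ a, (Phat.mulVec (fun b => mm σ b μ) a) ^ 2) := by
    intro σ
    have h1 : ∀ μ : Fin Q, ∑ a, (Phat.mulVec (fun b => mm σ b μ) a) ^ 2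
        = c * ∑ a, k a * α a ^ 2 * (mm σ a μ) ^ 2
          - (∑ a, k a * α a ^ 2 * (mm σ a μ) ^ 2
             + ∑ a, ∑ b ∈ Finset.univ.filter (fun b => b ≠ a),
                 α a * α b * (mm σ a μ) * (mm σ b μ)) :=
      fun μ => auxQuad2 α k c Phat hPP (fun b => mm σ b μ)
    simp only [h1]
    simp only [Finset.sum_sub_distrib, Finset.sum_add_distrib, ← Finset.mul_sum]
    ring
  have H1 : deriv (fun s : ℝ => 1 / NN * Real.log (∑ σ : S, Real.exp (NN * s / 2 * (∑ μ1, (∑ a1, k a1 * α a1 ^ 2 * mm σ a1 μ1 ^ 2 + ∑ a1, ∑ b1 ∈ Finset.univ.filter (fun b1 => b1 ≠ a1), α a1 * α b1 * mm σ a1 μ1 * mm σ b1 μ1)) + NN * (β - s) * c / 2 * (∑ μ1, ∑ a1, k a1 * α a1 ^ 2 * mm σ a1 μ1 ^ 2) + NN * (∑ μ1, ∑ a1, x a1 μ1 * Phat.mulVec (fun b => mm σ b μ1) a1)))) t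
      = -(1 / 2) * ∑ μ, ∑ a,
          (∑ σ : S, Phat.mulVec (fun b => mm σ b μ) a ^ 2 * Real.exp (NN * t / 2 * (∑ μ1, (∑ a1, k a1 * α a1 ^ 2 * mm σ a1 μ1 ^ 2 + ∑ a1, ∑ b1 ∈ Finset.univ.filter (fun b1 => b1 ≠ a1), α a1 * α b1 * mm σ a1 μ1 * mm σ b1 μ1)) + NN * (β - t) * c / 2 * (∑ μ1, ∑ a1, k a1 * α a1 ^ 2 * mm σ a1 μ1 ^ 2) + NN * (∑ μ1, ∑ a1, x a1 μ1 * Phat.mulVec (fun b => mm σ b μ1) a1))) / (∑ σ : S, Real.exp (NN * t / 2 * (∑ μ1, (∑ a1, k a1 * α a1 ^ 2 * mm σ a1 μ1 ^ 2 + ∑ a1, ∑ b1 ∈ Finset.univ.filter (fun b1 => b1 ≠ a1), α a1 * α b1 * mm σ a1 μ1 * mm σ b1 μ1)) + NN * (β - t) * c / 2 * (∑ μ1, ∑ a1, k a1 * α a1 ^ 2 * mm σ a1 μ1 ^ 2) + NN * (∑ μ1, ∑ a1, x a1 μ1 * Phat.mulVec (fun b => mm σ b μ1) a1))) := by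
    rw [hfunT, hdT]
    simp only [hexpT]
    simp only [hTval]
    have e1 : (∑ σ : S, NN * (-(1 / 2) * ∑ μ, ∑ a, (Phat.mulVec (fun b => mm σ b μ) a) ^ 2) * Real.exp (NN * t / 2 * (∑ μ1, (∑ a1, k a1 * α a1 ^ 2 * mm σ a1 μ1 ^ 2 + ∑ a1, ∑ b1 ∈ Finset.univ.filter (fun b1 => b1 ≠ a1), α a1 * α b1 * mm σ a1 μ1 * mm σ b1 μ1)) + NN * (β - t) * c / 2 * (∑ μ1, ∑ a1, k a1 * α a1 ^ 2 * mm σ a1 μ1 ^ 2) + NN * (∑ μ1, ∑ a1, x a1 μ1 * Phat.mulVec (fun b => mm σ b μ1) a1)))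
        = NN * (-(1 / 2)) * ∑ μ, ∑ a, (∑ σ : S, Phat.mulVec (fun b => mm σ b μ) a ^ 2 * Real.exp (NN * t / 2 * (∑ μ1, (∑ a1, k a1 * α a1 ^ 2 * mm σ a1 μ1 ^ 2 + ∑ a1, ∑ b1 ∈ Finset.univ.filter (fun b1 => b1 ≠ a1), α a1 * α b1 * mm σ a1 μ1 * mm σ b1 μ1)) + NN * (β - t) * c / 2 * (∑ μ1, ∑ a1, k a1 * α a1 ^ 2 * mm σ a1 μ1 ^ 2) + NN * (∑ μ1, ∑ a1, x a1 μ1 * Phat.mulVec (fun b => mm σ b μ1) a1))) := by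
      calc (∑ σ : S, NN * (-(1 / 2) * ∑ μ, ∑ a, (Phat.mulVec (fun b => mm σ b μ) a) ^ 2) * Real.exp (NN * t / 2 * (∑ μ1, (∑ a1, k a1 * α a1 ^ 2 * mm σ a1 μ1 ^ 2 + ∑ a1, ∑ b1 ∈ Finset.univ.filter (fun b1 => b1 ≠ a1), α a1 * α b1 * mm σ a1 μ1 * mm σ b1 μ1)) + NN * (β - t) * c / 2 * (∑ μ1, ∑ a1, k a1 * α a1 ^ 2 * mm σ a1 μ1 ^ 2) + NN * (∑ μ1, ∑ a1, x a1 μ1 * Phat.mulVec (fun b => mm σ b μ1) a1)))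
          = NN * (-(1 / 2)) * ∑ σ : S, ((∑ μ, ∑ a, (Phat.mulVec (fun b => mm σ b μ) a) ^ 2) * Real.exp (NN * t / 2 * (∑ μ1, (∑ a1, k a1 * α a1 ^ 2 * mm σ a1 μ1 ^ 2 + ∑ a1, ∑ b1 ∈ Finset.univ.filter (fun b1 => b1 ≠ a1), α a1 * α b1 * mm σ a1 μ1 * mm σ b1 μ1)) + NN * (β - t) * c / 2 * (∑ μ1, ∑ a1, k a1 * α a1 ^ 2 * mm σ a1 μ1 ^ 2) + NN * (∑ μ1, ∑ a1, x a1 μ1 * Phat.mulVec (fun b => mm σ b μ1) a1))) := by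
            rw [Finset.mul_sum]
            exact Finset.sum_congr rfl fun σ _ => by ring
        _ = NN * (-(1 / 2)) * ∑ μ, ∑ a, (∑ σ : S, Phat.mulVec (fun b => mm σ b μ) a ^ 2 * Real.exp (NN * t / 2 * (∑ μ1, (∑ a1, k a1 * α a1 ^ 2 * mm σ a1 μ1 ^ 2 + ∑ a1, ∑ b1 ∈ Finset.univ.filter (fun b1 => b1 ≠ a1), α a1 * α b1 * mm σ a1 μ1 * mm σ b1 μ1)) + NN * (β - t) * c / 2 * (∑ μ1, ∑ a1, k a1 * α a1 ^ 2 * mm σ a1 μ1 ^ 2) + NN * (∑ μ1, ∑ a1, x a1 μ1 * Phat.mulVec (fun b => mm σ b μ1) a1))) := by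
            congr 1
            simp only [Finset.sum_mul]
            rw [Finset.sum_comm]
            exact Finset.sum_congr rfl fun μ _ => Finset.sum_comm
    rw [e1]
    simp only [← Finset.sum_div]
    exact auxScal1 NN _ _ hNN hZne
  -- the x-derivatives
  have H2 : ∀ (μ : Fin Q) (a : Fin ν),
      deriv (fun s : ℝ => 1 / NN * Real.log (∑ σ : S,
        Real.exp (NN * t / 2 * (∑ μ1, (∑ a1, k a1 * α a1 ^ 2 * mm σ a1 μ1 ^ 2 + ∑ a1, ∑ b1 ∈ Finset.univ.filter (fun b1 => b1 ≠ a1), α a1 * α b1 * mm σ a1 μ1 * mm σ b1 μ1)) + NN * (β - t) * c / 2 * (∑ μ1, ∑ a1, k a1 * α a1 ^ 2 * mm σ a1 μ1 ^ 2) + NN * (∑ μ1, ∑ a1, (Function.update x a (Function.update (x a) μ s)) a1 μ1 * Phat.mulVec (fun b => mm σ b μ1) a1)))) (x a μ)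
      = (∑ σ : S, Phat.mulVec (fun b => mm σ b μ) a * Real.exp (NN * t / 2 * (∑ μ1, (∑ a1, k a1 * α a1 ^ 2 * mm σ a1 μ1 ^ 2 + ∑ a1, ∑ b1 ∈ Finset.univ.filter (fun b1 => b1 ≠ a1), α a1 * α b1 * mm σ a1 μ1 * mm σ b1 μ1)) + NN * (β - t) * c / 2 * (∑ μ1, ∑ a1, k a1 * α a1 ^ 2 * mm σ a1 μ1 ^ 2) + NN * (∑ μ1, ∑ a1, x a1 μ1 * Phat.mulVec (fun b => mm σ b μ1) a1))) / (∑ σ : S, Real.exp (NN * t / 2 * (∑ μ1, (∑ a1, k a1 * α a1 ^ 2 * mm σ a1 μ1 ^ 2 + ∑ a1, ∑ b1 ∈ Finset.univ.filter (fun b1 => b1 ≠ a1), α a1 * α b1 * mm σ a1 μ1 * mm σ b1 μ1)) + NN * (β - t) * c / 2 * (∑ μ1, ∑ a1, k a1 * α a1 ^ 2 * mm σ a1 μ1 ^ 2) + NN * (∑ μ1, ∑ a1, x a1 μ1 * Phat.mulVec (fun b => mm σ b μ1) a1))) := by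
    intro μ a
    have hfunX : (fun s : ℝ => 1 / NN * Real.log (∑ σ : S, Real.exp (NN * t / 2 * (∑ μ1, (∑ a1, k a1 * α a1 ^ 2 * mm σ a1 μ1 ^ 2 + ∑ a1, ∑ b1 ∈ Finset.univ.filter (fun b1 => b1 ≠ a1), α a1 * α b1 * mm σ a1 μ1 * mm σ b1 μ1)) + NN * (β - t) * c / 2 * (∑ μ1, ∑ a1, k a1 * α a1 ^ 2 * mm σ a1 μ1 ^ 2) + NN * (∑ μ1, ∑ a1, (Function.update x a (Function.update (x a) μ s)) a1 μ1 * Phat.mulVec (fun b => mm σ b μ1) a1))))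
        = (fun s : ℝ => 1 / NN * Real.log (∑ σ : S, Real.exp ((NN * t / 2 * (∑ μ1, (∑ a1, k a1 * α a1 ^ 2 * mm σ a1 μ1 ^ 2 + ∑ a1, ∑ b1 ∈ Finset.univ.filter (fun b1 => b1 ≠ a1), α a1 * α b1 * mm σ a1 μ1 * mm σ b1 μ1)) + NN * (β - t) * c / 2 * (∑ μ1, ∑ a1, k a1 * α a1 ^ 2 * mm σ a1 μ1 ^ 2) + NN * ((∑ μ1, ∑ a1, x a1 μ1 * Phat.mulVec (fun b => mm σ b μ1) a1) - x a μ * Phat.mulVec (fun b => mm σ b μ) a)) + s * (NN * (Phat.mulVec (fun b => mm σ b μ) a))))) := by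
      funext s
      refine congrArg _ (congrArg Real.log (Finset.sum_congr rfl fun σ _ =>
        congrArg Real.exp ?_))
      rw [auxUpdate x a μ s (fun μ' a' => Phat.mulVec (fun b => mm σ b μ') a')]
      ring
    have hdX : deriv (fun s : ℝ => 1 / NN * Real.log (∑ σ : S,
          Real.exp ((NN * t / 2 * (∑ μ1, (∑ a1, k a1 * α a1 ^ 2 * mm σ a1 μ1 ^ 2 + ∑ a1, ∑ b1 ∈ Finset.univ.filter (fun b1 => b1 ≠ a1), α a1 * α b1 * mm σ a1 μ1 * mm σ b1 μ1)) + NN * (β - t) * c / 2 * (∑ μ1, ∑ a1, k a1 * α a1 ^ 2 * mm σ a1 μ1 ^ 2) + NN * ((∑ μ1, ∑ a1, x a1 μ1 * Phat.mulVec (fun b => mm σ b μ1) a1) - x a μ * Phat.mulVec (fun b => mm σ b μ) a)) + s * (NN * (Phat.mulVec (fun b => mm σ b μ) a))))) (x a μ)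
        = 1 / NN * ((∑ σ : S, (NN * (Phat.mulVec (fun b => mm σ b μ) a)) * Real.exp ((NN * t / 2 * (∑ μ1, (∑ a1, k a1 * α a1 ^ 2 * mm σ a1 μ1 ^ 2 + ∑ a1, ∑ b1 ∈ Finset.univ.filter (fun b1 => b1 ≠ a1), α a1 * α b1 * mm σ a1 μ1 * mm σ b1 μ1)) + NN * (β - t) * c / 2 * (∑ μ1, ∑ a1, k a1 * α a1 ^ 2 * mm σ a1 μ1 ^ 2) + NN * ((∑ μ1, ∑ a1, x a1 μ1 * Phat.mulVec (fun b => mm σ b μ1) a1) - x a μ * Phat.mulVec (fun b => mm σ b μ) a)) + (x a μ) * (NN * (Phat.mulVec (fun b => mm σ b μ) a)))) /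
            (∑ σ : S, Real.exp ((NN * t / 2 * (∑ μ1, (∑ a1, k a1 * α a1 ^ 2 * mm σ a1 μ1 ^ 2 + ∑ a1, ∑ b1 ∈ Finset.univ.filter (fun b1 => b1 ≠ a1), α a1 * α b1 * mm σ a1 μ1 * mm σ b1 μ1)) + NN * (β - t) * c / 2 * (∑ μ1, ∑ a1, k a1 * α a1 ^ 2 * mm σ a1 μ1 ^ 2) + NN * ((∑ μ1, ∑ a1, x a1 μ1 * Phat.mulVec (fun b => mm σ b μ1) a1) - x a μ * Phat.mulVec (fun b => mm σ b μ) a)) + (x a μ) * (NN * (Phat.mulVec (fun b => mm σ b μ) a))))) :=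
      (auxDerivLogSum NN (fun σ => (NN * t / 2 * (∑ μ1, (∑ a1, k a1 * α a1 ^ 2 * mm σ a1 μ1 ^ 2 + ∑ a1, ∑ b1 ∈ Finset.univ.filter (fun b1 => b1 ≠ a1), α a1 * α b1 * mm σ a1 μ1 * mm σ b1 μ1)) + NN * (β - t) * c / 2 * (∑ μ1, ∑ a1, k a1 * α a1 ^ 2 * mm σ a1 μ1 ^ 2) + NN * ((∑ μ1, ∑ a1, x a1 μ1 * Phat.mulVec (fun b => mm σ b μ1) a1) - x a μ * Phat.mulVec (fun b => mm σ b μ) a))) (fun σ => (NN * (Phat.mulVec (fun b => mm σ b μ) a))) (x a μ)).deriv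
    have hexpX : ∀ σ : S, Real.exp ((NN * t / 2 * (∑ μ1, (∑ a1, k a1 * α a1 ^ 2 * mm σ a1 μ1 ^ 2 + ∑ a1, ∑ b1 ∈ Finset.univ.filter (fun b1 => b1 ≠ a1), α a1 * α b1 * mm σ a1 μ1 * mm σ b1 μ1)) + NN * (β - t) * c / 2 * (∑ μ1, ∑ a1, k a1 * α a1 ^ 2 * mm σ a1 μ1 ^ 2) + NN * ((∑ μ1, ∑ a1, x a1 μ1 * Phat.mulVec (fun b => mm σ b μ1) a1) - x a μ * Phat.mulVec (fun b => mm σ b μ) a)) + (x a μ) * (NN * (Phat.mulVec (fun b => mm σ b μ) a))) = Real.exp (NN * t / 2 * (∑ μ1, (∑ a1, k a1 * α a1 ^ 2 * mm σ a1 μ1 ^ 2 + ∑ a1, ∑ b1 ∈ Finset.univ.filter (fun b1 => b1 ≠ a1), α a1 * α b1 * mm σ a1 μ1 * mm σ b1 μ1)) + NN * (β - t) * c / 2 * (∑ μ1, ∑ a1, k a1 * α a1 ^ 2 * mm σ a1 μ1 ^ 2) + NN * (∑ μ1, ∑ a1, x a1 μ1 * Phat.mulVec (fun b => mm σ b μ1)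 a1)) :=
      fun σ => congrArg Real.exp (by ring)
    rw [hfunX, hdX]
    simp only [hexpX]
    have e2 : (∑ σ : S, (NN * (Phat.mulVec (fun b => mm σ b μ) a)) * Real.exp (NN * t / 2 * (∑ μ1, (∑ a1, k a1 * α a1 ^ 2 * mm σ a1 μ1 ^ 2 + ∑ a1, ∑ b1 ∈ Finset.univ.filter (fun b1 => b1 ≠ a1), α a1 * α b1 * mm σ a1 μ1 * mm σ b1 μ1)) + NN * (β - t) * c / 2 * (∑ μ1, ∑ a1, k a1 * α a1 ^ 2 * mm σ a1 μ1 ^ 2) + NN * (∑ μ1, ∑ a1, x a1 μ1 * Phat.mulVec (fun b => mm σ b μ1) a1))) = NN * ∑ σ : S, Phat.mulVec (fun b => mm σ b μ) a * Real.exp (NN * t / 2 * (∑ μ1, (∑ a1, k a1 * α a1 ^ 2 * mm σ a1 μ1 ^ 2 + ∑ a1, ∑ b1 ∈ Finset.univ.filter (fun b1 => b1 ≠ a1), α a1 * α b1 * mm σ a1 μ1 * mm σ b1 μ1)) + NN * (β - t) * c / 2 * (∑ μ1, ∑ a1, k a1 * α a1 ^ 2 * mm σ a1 μ1 ^ 2)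 + NN * (∑ μ1, ∑ a1, x a1 μ1 * Phat.mulVec (fun b => mm σ b μ1) a1)) := by
      rw [Finset.mul_sum]
      exact Finset.sum_congr rfl fun σ _ => by ring
    rw [e2]
    exact auxScal2 NN _ _ hNN hZne
  rw [H1]
  simp only [H2]
  simp only [Finset.sum_sub_distrib]
  ring

/-- The interpolating pressure `Φ_N` satisfies a Hamilton–Jacobi equation whose
potential is the sum of the fluctuations of the rotated magnetizations. -/
theorem stmt16 (ν P : ℕ) (hν : 1 ≤ ν) (hP : 1 ≤ P)
    (Nsz : Fin ν → ℕ) (hNsz : ∀ a, 1 ≤ Nsz a)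
    (N : ℕ) (hN : N = ∑ a, Nsz a)
    (α : Fin ν → ℝ) (hα : ∀ a, α a = (Nsz a : ℝ) / (N : ℝ))
    (ξ : Fin P → (a : Fin ν) → Fin (Nsz a) → ℝ)
    (hξ : ∀ μ a i, ξ μ a i = 1 ∨ ξ μ a i = -1)
    (k : Fin ν → ℝ) (β c : ℝ)
    (Phat : Matrix (Fin ν) (Fin ν) ℝ)
    -- group Mattis magnetizations
    (m : ((a : Fin ν) → Fin (Nsz a) → Bool) → Fin ν → Fin P → ℝ)
    (hm : ∀ σ a μ, m σ a μ =
      (1 / (Nsz a : ℝ)) * ∑ i, ξ μ a i * (if σ a i then (1 : ℝ) else -1))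
    -- interpolating Boltzmann factor
    (B : ℝ → (Fin ν → Fin P → ℝ) → ((a : Fin ν) → Fin (Nsz a) → Bool) → ℝ)
    (hB : ∀ t x σ, B t x σ = Real.exp (
      (N : ℝ) * t / 2 * ∑ μ, (∑ a, k a * α a ^ 2 * m σ a μ ^ 2
        + ∑ a, ∑ b ∈ Finset.univ.filter (fun b => b ≠ a),
            α a * α b * m σ a μ * m σ b μ)
      + (N : ℝ) * (β - t) * c / 2 * ∑ μ, ∑ a, k a * α a ^ 2 * m σ a μ ^ 2
      + (N : ℝ) * ∑ μ, ∑ a, x a μ * Phat.mulVec (fun b => m σ b μ) a))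
    -- interpolating pressure
    (Φ : ℝ → (Fin ν → Fin P → ℝ) → ℝ)
    (hΦ : ∀ t x, Φ t x =
      (1 / (N : ℝ)) * Real.log (∑ σ : (a : Fin ν) → Fin (Nsz a) → Bool, B t x σ))
    -- Boltzmann–Gibbs expectation associated to `B t x`
    (avg : ℝ → (Fin ν → Fin P → ℝ) → (((a : Fin ν) → Fin (Nsz a) → Bool) → ℝ) → ℝ)
    (havg : ∀ t x O, avg t x O =
      (∑ σ : (a : Fin ν) → Fin (Nsz a) → Bool, O σ * B t x σ) /
        (∑ σ : (a : Fin ν) → Fin (Nsz a) → Bool, B t x σ))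
    (hPP : Phatᵀ * Phat = c • Matrix.diagonal (fun a => k a * α a ^ 2) - hopfieldJ ν α k) :
    ∀ (t : ℝ) (x : Fin ν → Fin P → ℝ),
      deriv (fun s : ℝ => Φ s x) t
      + (1 / 2) * ∑ μ, ∑ a,
          (deriv (fun s : ℝ =>
            Φ t (Function.update x a (Function.update (x a) μ s))) (x a μ)) ^ 2
      + (1 / 2) * ∑ μ, ∑ a,
          (avg t x (fun σ => Phat.mulVec (fun b => m σ b μ) a ^ 2)
            - avg t x (fun σ => Phat.mulVec (fun b => m σ b μ) a) ^ 2)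
      = 0 := by
  intro t x
  have hνne : Nonempty (Fin ν) := Fin.pos_iff_nonempty.mp hν
  have hNpos : 0 < N := by
    rw [hN]; exact Finset.sum_pos (fun a _ => hNsz a) Finset.univ_nonempty
  have hNNe : (N : ℝ) ≠ 0 := by exact_mod_cast hNpos.ne'
  simp only [hΦ, hB, havg]
  exact master (N : ℝ) hNNe α k β c Phat hPP m t x
end
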